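/- The sum S(g) = ∑_{i=1}^{g−1} C(g,i)·C(3g−4, 3i−2) satisfies S(g) ~ 2^{4g−4}/√(6πg) as g → ∞, i.e. S(g)·√(6πg)/2^{4g−4} tends to 1 as the integer g tends to infinity. -/

import Mathlib

open Filter

/-- `S(g) = ∑_{i=1}^{g−1} C(g,i)·C(3g−4,3i−2)`. -/
noncomputable def Ssum (g : ℕ) : ℝ :=
  ∑ i ∈ Finset.Icc 1 (g - 1), (Nat.choose g i : ℝ) * (Nat.choose (3 * g - 4) (3 * i - 2) : ℝ)

open Real MeasureTheory intervalIntegral Topology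

noncomputable def Ig (g : ℕ) : ℝ :=
  ∫ t in (-π)..π, (Real.cos (t/2))^(3*g-4) * (Real.cos (3*t/2))^g

lemma half_angle (θ : ℝ) :
    (1 + Complex.exp (θ * Complex.I)) / 2
      = Complex.exp ((θ/2 : ℝ) * Complex.I) * Complex.cos ((θ/2 : ℝ)) := by
  have h := Complex.two_cos (x := ((θ/2 : ℝ) : ℂ))
  have h2 : Complex.exp ((θ:ℂ) * Complex.I)
      = Complex.exp ((θ/2 : ℝ) * Complex.I) * Complex.exp ((θ/2 : ℝ) * Complex.I) := by
    rw [← Complex.exp_add]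
    norm_num
    ring_nf
  rw [h2]
  have h3 : Complex.exp (↑(θ/2) * Complex.I) * Complex.cos (↑(θ/2))
      = Complex.exp (↑(θ/2) * Complex.I) * ((Complex.exp (↑(θ/2) * Complex.I) + Complex.exp (-↑(θ/2) * Complex.I)) / 2) := by
    rw [← h]; ring
  have hEE : Complex.exp (↑(θ/2) * Complex.I) * Complex.exp (-↑(θ/2) * Complex.I) = 1 := by
    rw [← Complex.exp_add, show ((↑(θ/2) * Complex.I + -↑(θ/2) * Complex.I) : ℂ) = 0 by ring,
      Complex.exp_zero]
  rw [h3]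
  linear_combination (-(1/2) : ℂ) * hEE

lemma int_exp (k : ℤ) :
    (∫ t in (-π : ℝ)..π, Complex.exp (k * Complex.I * t))
      = if k = 0 then ((2*π : ℝ) : ℂ) else 0 := by
  rcases eq_or_ne k 0 with hk | hk
  · simp [hk, two_mul]
  · have hc : (k : ℂ) * Complex.I ≠ 0 := by
      simp [Complex.ext_iff, hk]
    rw [if_neg hk, integral_exp_mul_complex hc]
    have : Complex.exp ((k:ℂ) * Complex.I * (π:ℝ)) = Complex.exp ((k:ℂ) * Complex.I * ((-π:ℝ))) := by
      rw [show ((k:ℂ) * Complex.I * (π:ℝ)) = (k:ℂ) * Complex.I * ((-π:ℝ)) + k * (2*π*Complex.I) by push_cast; ring,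
        Complex.exp_add, Complex.exp_int_mul_two_pi_mul_I, mul_one]
    rw [this, sub_self, zero_div]

lemma pointwise_id (g : ℕ) (hg : 2 ≤ g) (t : ℝ) :
    Complex.exp (2*t*Complex.I) * ((1 + Complex.exp (t * Complex.I))/2)^(3*g-4)
        * ((1 + Complex.exp (((-(3*t) : ℝ)) * Complex.I))/2)^g
      = ((Real.cos (t/2) : ℂ))^(3*g-4) * ((Real.cos (3*t/2) : ℂ))^g := by
  have hc : Real.cos (-(3*t)/2) = Real.cos (3*t/2) := by
    rw [show -(3*t)/2 = -(3*t/2) by ring, Real.cos_neg]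
  rw [half_angle t, half_angle (-(3*t)), mul_pow, mul_pow,
    ← Complex.ofReal_cos, ← Complex.ofReal_cos, hc,
    ← Complex.exp_nat_mul, ← Complex.exp_nat_mul]
  have hn : ((3*g-4 : ℕ) : ℂ) = 3*(g:ℂ) - 4 := by
    rw [Nat.cast_sub (by omega : 4 ≤ 3*g)]; push_cast; ring
  have key : Complex.exp (2*(t:ℂ)*Complex.I) * Complex.exp (((3*g-4:ℕ):ℂ) * (↑(t/2) * Complex.I))
      * Complex.exp (((g:ℕ):ℂ) * (↑(-(3*t)/2) * Complex.I)) = 1 := by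
    rw [← Complex.exp_add, ← Complex.exp_add,
      show (2*(t:ℂ)*Complex.I) + (((3*g-4:ℕ):ℂ) * (↑(t/2) * Complex.I))
          + (((g:ℕ):ℂ) * (↑(-(3*t)/2) * Complex.I)) = 0 by rw [hn]; push_cast; ring,
      Complex.exp_zero]
  linear_combination ((Real.cos (t/2) : ℂ))^(3*g-4) * ((Real.cos (3*t/2) : ℂ))^g * key

lemma binom_exp (n : ℕ) (z : ℂ) :
    ((1 + z)/2)^n = (∑ j ∈ Finset.range (n+1), (n.choose j : ℂ) * z^j) / 2^n := by
  rw [div_pow, add_comm, add_pow]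
  congr 1
  exact Finset.sum_congr rfl fun j hj => by simp [mul_comm]

lemma Ig_eq (g : ℕ) (hg : 2 ≤ g) : Ig g = 2 * π * Ssum g / 2^(4*g-4) := by
  have key : (Ig g : ℂ) = ((2 * π * Ssum g / 2^(4*g-4) : ℝ) : ℂ) := by
    have cast1 : (Ig g : ℂ)
        = ∫ t in (-π)..π, ((Real.cos (t/2) : ℂ))^(3*g-4) * ((Real.cos (3*t/2) : ℂ))^g := by
      rw [Ig, ← intervalIntegral.integral_ofReal]
      exact intervalIntegral.integral_congr fun t _ => by push_cast; ring
    set F : ℕ × ℕ → ℝ → ℂ := fun p t =>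
      ((3*g-4).choose p.1 : ℂ) * (g.choose p.2 : ℂ)
        * Complex.exp ((((p.1:ℤ) + 2 - 3*(p.2:ℤ) : ℤ) : ℂ) * Complex.I * t) with hF
    have expand : ∀ t : ℝ,
        ((Real.cos (t/2) : ℂ))^(3*g-4) * ((Real.cos (3*t/2) : ℂ))^g
          = (∑ p ∈ (Finset.range (3*g-3)) ×ˢ (Finset.range (g+1)), F p t) / 2^(4*g-4) := by
      intro t
      rw [← pointwise_id g hg t, binom_exp, binom_exp]
      rw [show 3*g-4+1 = 3*g-3 by omega]
      rw [show ((2:ℂ)^(4*g-4)) = 2^(3*g-4) * 2^g from by rw [← pow_add]; congr 1; omega]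
      rw [show ∀ a b c x y : ℂ, a * (b/x) * (c/y) = a*b*c/(x*y) from fun _ _ _ _ _ => by ring]
      congr 1
      rw [Finset.sum_product, mul_assoc, Finset.sum_mul_sum, Finset.mul_sum]
      refine Finset.sum_congr rfl fun j hj => ?_
      rw [Finset.mul_sum]
      refine Finset.sum_congr rfl fun m hm => ?_
      simp only [hF]
      have e1 : Complex.exp (↑t * Complex.I) ^ j = Complex.exp ((j : ℕ) * (↑t * Complex.I)) :=
        (Complex.exp_nat_mul _ _).symm
      have e2 : Complex.exp (((-(3*t):ℝ)) * Complex.I) ^ m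
          = Complex.exp ((m : ℕ) * (((-(3*t):ℝ)) * Complex.I)) := (Complex.exp_nat_mul _ _).symm
      rw [e1, e2]
      rw [show Complex.exp (2*(t:ℂ)*Complex.I) * ((((3*g-4).choose j : ℂ)) * Complex.exp ((j:ℕ) * ((t:ℂ) * Complex.I)) * (((g.choose m : ℂ)) * Complex.exp ((m:ℕ) * (((-(3*t):ℝ):ℂ) * Complex.I))))
          = (((3*g-4).choose j : ℂ)) * ((g.choose m : ℂ)) * (Complex.exp (2*(t:ℂ)*Complex.I) * Complex.exp ((j:ℕ) * ((t:ℂ) * Complex.I)) * Complex.exp ((m:ℕ) * (((-(3*t):ℝ):ℂ) * Complex.I))) from by ring]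
      rw [← Complex.exp_add, ← Complex.exp_add]
      congr 2
      push_cast
      ring
    rw [cast1, intervalIntegral.integral_congr fun t _ => expand t]
    rw [intervalIntegral.integral_div]
    rw [intervalIntegral.integral_finset_sum (fun p hp => (by fun_prop :
        Continuous fun t : ℝ => F p t).intervalIntegrable _ _)]
    have eachInt : ∀ p : ℕ × ℕ,
        (∫ t in (-π)..π, F p t)
          = ((3*g-4).choose p.1 : ℂ) * (g.choose p.2 : ℂ)
              * (if ((p.1:ℤ) + 2 - 3*(p.2:ℤ) : ℤ) = 0 then ((2*π:ℝ):ℂ) else 0) := by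
      intro p
      rw [hF]
      rw [intervalIntegral.integral_const_mul, int_exp]
    rw [Finset.sum_congr rfl fun p _ => eachInt p]
    rw [Finset.sum_product_right]
    have inner : ∀ m : ℕ, (∑ j ∈ Finset.range (3*g-3),
          ((3*g-4).choose j : ℂ) * (g.choose m : ℂ)
            * (if ((j:ℤ) + 2 - 3*(m:ℤ) : ℤ) = 0 then ((2*π:ℝ):ℂ) else 0))
        = if m ∈ Finset.Icc 1 (g-1) then
            (g.choose m : ℂ) * ((3*g-4).choose (3*m-2) : ℂ) * ((2*π:ℝ):ℂ) else 0 := by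
      intro m
      by_cases hm : m ∈ Finset.Icc 1 (g-1)
      · rw [if_pos hm]
        simp only [Finset.mem_Icc] at hm
        rw [Finset.sum_eq_single (3*m-2)]
        · rw [if_pos (by push_cast [Nat.cast_sub (by omega : 2 ≤ 3*m)]; ring), mul_comm
            ((3*g-4).choose (3*m-2) : ℂ)]
        · intro j hj hne
          rw [if_neg, mul_zero]
          intro hcon
          exact hne (by omega)
        · intro habs
          exact absurd (Finset.mem_range.mpr (by omega)) habs
      · rw [if_neg hm]
        simp only [Finset.mem_Icc, not_and_or, not_le] at hm
        refine Finset.sum_eq_zero fun j hj => ?_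
        rw [if_neg, mul_zero]
        simp only [Finset.mem_range] at hj
        intro hcon
        omega
    rw [Finset.sum_congr rfl fun m _ => inner m]
    rw [Finset.sum_ite_mem, Finset.inter_eq_right.mpr (fun m hm => Finset.mem_range.mpr
      (by simp only [Finset.mem_Icc] at hm; omega))]
    rw [Ssum]
    push_cast
    rw [Finset.mul_sum]
    congr 1
    exact Finset.sum_congr rfl fun m hm => by ring
  exact_mod_cast key

lemma sqrtg_atTop : Tendsto (fun g : ℕ => Real.sqrt g) atTop atTop := by
  have h : Tendsto Real.sqrt atTop atTop := by
    refine (tendsto_rpow_atTop (by norm_num : (0:ℝ) < 1/2)).congr' ?_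
    filter_upwards [eventually_ge_atTop (0:ℝ)] with x hx
    exact (Real.sqrt_eq_rpow x).symm
  exact h.comp tendsto_natCast_atTop_atTop

lemma K1 (c : ℝ) :
    Tendsto (fun g : ℕ => (g:ℝ) * (1 - Real.cos (c / Real.sqrt g))) atTop (𝓝 (c^2/2)) := by
  have hdiff : Tendsto (fun g : ℕ => (g:ℝ) * (1 - Real.cos (c / Real.sqrt g)) - c^2/2) atTop (𝓝 0) := by
    have hbnd : Tendsto (fun g : ℕ => c^4 * (5/96) / (g:ℝ)) atTop (𝓝 0) := by
      have : Tendsto (fun g : ℕ => (g:ℝ)) atTop atTop := tendsto_natCast_atTop_atTop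
      simpa using Tendsto.div_atTop tendsto_const_nhds this
    refine squeeze_zero_norm' ?_ hbnd
    · filter_upwards [eventually_ge_atTop (max 1 (Nat.ceil (c^2)))] with g hg
      have hg1 : (1:ℕ) ≤ g := le_trans (le_max_left _ _) hg
      have hgR : (1:ℝ) ≤ (g:ℝ) := by exact_mod_cast hg1
      have hgpos : (0:ℝ) < g := by linarith
      have hsq : Real.sqrt g ^ 2 = (g:ℝ) := Real.sq_sqrt (by positivity)
      have hsqpos : 0 < Real.sqrt g := Real.sqrt_pos.mpr hgpos
      set x := c / Real.sqrt g with hx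
      have hx2 : x^2 = c^2 / g := by rw [hx, div_pow, hsq]
      have hxabs : |x| ≤ 1 := by
        rw [abs_le]
        have hc2 : c^2 ≤ g := by
          calc c^2 ≤ (Nat.ceil (c^2) : ℝ) := Nat.le_ceil _
          _ ≤ (g:ℝ) := by exact_mod_cast le_trans (le_max_right _ _) hg
        have : x^2 ≤ 1 := by rw [hx2]; rw [div_le_one hgpos]; exact hc2
        constructor <;> nlinarith [sq_nonneg (x-1), sq_nonneg (x+1)]
      have hb := Real.cos_bound hxabs
      have hx4 : |x|^4 = c^4/g^2 := by
        rw [← sq_abs] at hx2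
        rw [show (4:ℕ) = 2*2 from rfl, pow_mul, hx2, div_pow]
        congr 1
        ring
      have key : (g:ℝ) * (1 - Real.cos x) - c^2/2 = -((g:ℝ) * (Real.cos x - (1 - x^2/2))) := by
        have : (g:ℝ) * (x^2/2) = c^2/2 := by rw [hx2]; field_simp
        nlinarith [this]
      rw [key, norm_neg, norm_mul, Real.norm_natCast]
      calc (g:ℝ) * ‖Real.cos x - (1 - x^2/2)‖ ≤ (g:ℝ) * (|x|^4 * (5/96)) := by
            exact mul_le_mul_of_nonneg_left hb (by positivity)
        _ = c^4 * (5/96) / g := by rw [hx4]; field_simp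
  have := hdiff.add (tendsto_const_nhds (x := c^2/2))
  simpa using this

lemma cos_pow_limit (c : ℝ) (a : ℕ → ℕ) (A : ℝ)
    (hA : Tendsto (fun g : ℕ => (a g : ℝ) / g) atTop (𝓝 A)) :
    Tendsto (fun g : ℕ => Real.cos (c / Real.sqrt g) ^ (a g)) atTop
      (𝓝 (Real.exp (-(A * c^2/2)))) := by
  rcases eq_or_ne c 0 with rfl | hc
  · simpa using (tendsto_const_nhds : Tendsto (fun _ : ℕ => (1:ℝ)) atTop _)
  · have hx0 : Tendsto (fun g : ℕ => c / Real.sqrt g) atTop (𝓝 0) :=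
      Tendsto.div_atTop tendsto_const_nhds sqrtg_atTop
    have hcos1 : Tendsto (fun g : ℕ => Real.cos (c / Real.sqrt g)) atTop (𝓝 1) := by
      have := (Real.continuous_cos.tendsto 0).comp hx0
      simpa [Function.comp_def] using this
    have hpos : ∀ᶠ g : ℕ in atTop, 0 < Real.cos (c / Real.sqrt g) :=
      hcos1.eventually (eventually_gt_nhds zero_lt_one)
    have hK := K1 c
    have hlt1 : ∀ᶠ g : ℕ in atTop, Real.cos (c / Real.sqrt g) < 1 := by
      have hpos' : ∀ᶠ g : ℕ in atTop, 0 < (g:ℝ) * (1 - Real.cos (c / Real.sqrt g)) :=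
        hK.eventually (eventually_gt_nhds (by positivity : (0:ℝ) < c^2/2))
      filter_upwards [hpos', eventually_gt_atTop 0] with g h1 h2
      have hgpos : (0:ℝ) < g := by exact_mod_cast h2
      nlinarith
    have hslope : Tendsto (fun y : ℝ => Real.log y / (y - 1)) (𝓝[≠] 1) (𝓝 1) := by
      have h := Real.hasDerivAt_log one_ne_zero
      rw [hasDerivAt_iff_tendsto_slope] at h
      simp only [slope_fun_def, Real.log_one, sub_zero, inv_one] at h
      refine h.congr fun y => ?_
      simp [vsub_eq_sub, smul_eq_mul]
      ring
    have hmem : Tendsto (fun g : ℕ => Real.cos (c / Real.sqrt g)) atTop (𝓝[≠] (1:ℝ)) := by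
      refine tendsto_nhdsWithin_of_tendsto_nhds_of_eventually_within _ hcos1 ?_
      filter_upwards [hlt1] with g h
      exact ne_of_lt h
    have hlogratio : Tendsto (fun g : ℕ =>
        Real.log (Real.cos (c / Real.sqrt g)) / (Real.cos (c / Real.sqrt g) - 1)) atTop (𝓝 1) :=
      hslope.comp hmem
    have hgc : Tendsto (fun g : ℕ => (g:ℝ) * (Real.cos (c / Real.sqrt g) - 1)) atTop
        (𝓝 (-(c^2/2))) := by
      have := hK.neg
      refine this.congr fun g => by ring
    have hmain : Tendsto (fun g : ℕ => (a g : ℝ) * Real.log (Real.cos (c / Real.sqrt g))) atTop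
        (𝓝 (A * -(c^2/2) * 1)) := by
      have h2 := (hA.mul hgc).mul hlogratio
      refine h2.congr' ?_
      filter_upwards [hlt1, eventually_gt_atTop 0] with g h1 hg0'
      have hg0 : (g:ℝ) ≠ 0 := Nat.cast_ne_zero.mpr hg0'.ne'
      have hne : Real.cos (c / Real.sqrt g) - 1 ≠ 0 := sub_ne_zero.mpr (ne_of_lt h1)
      field_simp
    have hexp := (Real.continuous_exp.tendsto _).comp hmain
    have heq : (fun g : ℕ => Real.exp ((a g : ℝ) * Real.log (Real.cos (c / Real.sqrt g))))
        =ᶠ[atTop] (fun g : ℕ => Real.cos (c / Real.sqrt g) ^ (a g)) := by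
      filter_upwards [hpos] with g hg
      rw [Real.exp_nat_mul, Real.exp_log hg]
    have hfinal := hexp.congr' heq
    have : A * -(c^2/2) * 1 = -(A*c^2/2) := by ring
    rw [← this]
    exact hfinal

lemma ratio3 : Tendsto (fun g : ℕ => ((3*g-4 : ℕ) : ℝ) / g) atTop (𝓝 3) := by
  have h0 : Tendsto (fun g : ℕ => 3 - 4/(g:ℝ)) atTop (𝓝 3) := by
    have := Tendsto.div_atTop (tendsto_const_nhds (x := (4:ℝ))) tendsto_natCast_atTop_atTop
    simpa using (tendsto_const_nhds (x := (3:ℝ))).sub this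
  refine h0.congr' ?_
  filter_upwards [eventually_ge_atTop 2] with g hg
  have hgR : (0:ℝ) < g := by positivity
  rw [Nat.cast_sub (by omega : 4 ≤ 3*g)]
  push_cast
  field_simp

lemma ratio1 : Tendsto (fun g : ℕ => ((g : ℕ) : ℝ) / g) atTop (𝓝 1) := by
  refine (tendsto_const_nhds (x := (1:ℝ))).congr' ?_
  filter_upwards [eventually_ge_atTop 1] with g hg
  have : (g:ℝ) ≠ 0 := by positivity
  rw [div_self this]

lemma main_B : Tendsto (fun g : ℕ => Real.sqrt g * Ig g) atTop (𝓝 (Real.sqrt (2*π/3))) := by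
  set F : ℕ → ℝ → ℝ := fun g u =>
    Set.indicator (Set.Ioc (-(π * Real.sqrt g)) (π * Real.sqrt g))
      (fun u => Real.cos (u / Real.sqrt g / 2) ^ (3*g-4)
        * Real.cos (3 * (u / Real.sqrt g) / 2) ^ g) u with hFdef
  have step1 : ∀ᶠ g : ℕ in atTop, (∫ u : ℝ, F g u) = Real.sqrt g * Ig g := by
    filter_upwards [eventually_ge_atTop 1] with g hg
    have hgpos : (0:ℝ) < g := by exact_mod_cast hg
    have hs : (0:ℝ) < Real.sqrt g := Real.sqrt_pos.mpr hgpos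
    have hcomp := intervalIntegral.integral_comp_div
      (a := -(π * Real.sqrt g)) (b := π * Real.sqrt g)
      (f := fun t => Real.cos (t/2) ^ (3*g-4) * Real.cos (3*t/2) ^ g) hs.ne'
    rw [show -(π * Real.sqrt g) / Real.sqrt g = -π by field_simp,
      show (π * Real.sqrt g) / Real.sqrt g = π by field_simp] at hcomp
    have hle : -(π * Real.sqrt g) ≤ π * Real.sqrt g := by
      have h0 : (0:ℝ) ≤ π * Real.sqrt g := by positivity
      linarith
    calc (∫ u : ℝ, F g u)
        = ∫ u in Set.Ioc (-(π * Real.sqrt g)) (π * Real.sqrt g),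
            Real.cos (u / Real.sqrt g / 2) ^ (3*g-4)
              * Real.cos (3 * (u / Real.sqrt g) / 2) ^ g :=
          MeasureTheory.integral_indicator measurableSet_Ioc
      _ = ∫ u in (-(π * Real.sqrt g))..(π * Real.sqrt g),
            Real.cos (u / Real.sqrt g / 2) ^ (3*g-4)
              * Real.cos (3 * (u / Real.sqrt g) / 2) ^ g :=
          (intervalIntegral.integral_of_le hle).symm
      _ = Real.sqrt g • ∫ t in (-π)..π, Real.cos (t/2) ^ (3*g-4) * Real.cos (3*t/2) ^ g := hcomp
      _ = Real.sqrt g * Ig g := by rw [smul_eq_mul, Ig]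
  have gauss : Tendsto (fun g : ℕ => ∫ u : ℝ, F g u) atTop
      (𝓝 (∫ u : ℝ, Real.exp (-(3/2) * u^2))) := by
    refine MeasureTheory.tendsto_integral_filter_of_dominated_convergence
      (bound := fun u => Real.exp (-(1/(2*π^2)) * u^2)) ?_ ?_ ?_ ?_
    · refine Eventually.of_forall fun g => ?_
      have hcont : Continuous (fun u : ℝ => Real.cos (u / Real.sqrt g / 2) ^ (3*g-4)
          * Real.cos (3 * (u / Real.sqrt g) / 2) ^ g) := by fun_prop
      exact (hcont.aestronglyMeasurable).indicator measurableSet_Ioc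
    · filter_upwards [eventually_ge_atTop 2] with g hg
      refine MeasureTheory.ae_of_all _ fun u => ?_
      have hgpos : (0:ℝ) < g := by
        have : (2:ℝ) ≤ g := by exact_mod_cast hg
        linarith
      have hs : (0:ℝ) < Real.sqrt g := Real.sqrt_pos.mpr hgpos
      by_cases hu : u ∈ Set.Ioc (-(π * Real.sqrt g)) (π * Real.sqrt g)
      · rw [hFdef]
        simp only [Set.indicator_of_mem hu]
        set x := u / Real.sqrt g with hx
        have hxabs : |x| ≤ π := by
          rw [abs_le]
          obtain ⟨h1, h2⟩ := hu
          constructor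
          · rw [hx, le_div_iff₀ hs]; linarith
          · rw [hx, div_le_iff₀ hs]; linarith
        have hx2 : x^2 = u^2 / g := by rw [hx, div_pow, Real.sq_sqrt hgpos.le]
        obtain ⟨hxl, hxr⟩ := abs_le.1 hxabs
        have hcosnn : 0 ≤ Real.cos (x/2) :=
          Real.cos_nonneg_of_mem_Icc ⟨by linarith, by linarith⟩
        have habs2 : |x/2| ≤ π := by
          rw [abs_div, abs_of_pos (by norm_num : (0:ℝ) < 2)]
          linarith [Real.pi_pos]
        have hstep1 : Real.cos (x/2) ≤ Real.exp (-(2/π^2) * (x/2)^2) := by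
          have h1 := Real.cos_le_one_sub_mul_cos_sq habs2
          have h2 := Real.add_one_le_exp (-(2/π^2) * (x/2)^2)
          have hrw : (2/π^2) * (x/2)^2 = 2/π^2 * (x/2)^2 := rfl
          nlinarith
        rw [Real.norm_eq_abs, abs_mul, abs_pow, abs_pow]
        calc |Real.cos (x/2)|^(3*g-4) * |Real.cos (3*x/2)|^g
            ≤ |Real.cos (x/2)|^(3*g-4) * 1 := by
              refine mul_le_mul_of_nonneg_left
                (pow_le_one₀ (abs_nonneg _) (Real.abs_cos_le_one _)) (by positivity)
          _ = Real.cos (x/2)^(3*g-4) := by rw [abs_of_nonneg hcosnn, mul_one]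
          _ ≤ Real.exp (-(2/π^2) * (x/2)^2)^(3*g-4) := pow_le_pow_left₀ hcosnn hstep1 _
          _ = Real.exp (((3*g-4 : ℕ):ℝ) * (-(2/π^2) * (x/2)^2)) := (Real.exp_nat_mul _ _).symm
          _ ≤ Real.exp (-(1/(2*π^2)) * u^2) := by
              rw [Real.exp_le_exp]
              have hcast : ((3*g-4 : ℕ):ℝ) = 3*(g:ℝ) - 4 := by
                rw [Nat.cast_sub (by omega : 4 ≤ 3*g)]; push_cast; ring
              have hq : (x/2)^2 = u^2/(4*(g:ℝ)) := by
                rw [show (x/2)^2 = x^2/4 from by ring, hx2]; ring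
              rw [hcast, hq,
                show (3*(g:ℝ)-4) * (-(2/π^2) * (u^2/(4*(g:ℝ))))
                  = -((3*(g:ℝ)-4) * u^2/(2*π^2*(g:ℝ))) from by ring,
                show (-(1/(2*π^2)) * u^2 : ℝ) = -(u^2/(2*π^2)) from by ring,
                neg_le_neg_iff, div_le_div_iff₀ (by positivity) (by positivity)]
              have hgge : (g:ℝ) ≤ 3*(g:ℝ) - 4 := by
                have : (2:ℝ) ≤ g := by exact_mod_cast hg
                linarith
              nlinarith [sq_nonneg u, sq_nonneg π, Real.pi_pos, mul_nonneg (sq_nonneg u) (sq_nonneg π)]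
      · rw [hFdef]
        simp only [Set.indicator_of_notMem hu]
        rw [norm_zero]
        positivity
    · exact integrable_exp_neg_mul_sq (by positivity)
    · refine MeasureTheory.ae_of_all _ fun u => ?_
      have h1 := cos_pow_limit (u/2) (fun g => 3*g-4) 3 ratio3
      have h2 := cos_pow_limit (3*u/2) (fun g => g) 1 ratio1
      have hprod := h1.mul h2
      have hval : Real.exp (-(3 * (u/2)^2/2)) * Real.exp (-(1 * (3*u/2)^2/2))
          = Real.exp (-(3/2) * u^2) := by
        rw [← Real.exp_add]; congr 1; ring
      rw [hval] at hprod
      refine hprod.congr' ?_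
      have hT : Tendsto (fun g : ℕ => π * Real.sqrt g) atTop atTop :=
        Tendsto.const_mul_atTop Real.pi_pos sqrtg_atTop
      filter_upwards [hT.eventually_ge_atTop (|u| + 1), eventually_ge_atTop 1] with g hg hg1
      have hmem : u ∈ Set.Ioc (-(π * Real.sqrt g)) (π * Real.sqrt g) := by
        constructor
        · have := neg_abs_le u; linarith
        · have := le_abs_self u; linarith
      rw [hFdef]
      simp only [Set.indicator_of_mem hmem]
      rw [show u/2/Real.sqrt g = u / Real.sqrt g / 2 from div_right_comm u 2 _,
        show 3*u/2/Real.sqrt g = 3 * (u / Real.sqrt g) / 2 from by ring]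
  have hgaussval : (∫ u : ℝ, Real.exp (-(3/2) * u^2)) = Real.sqrt (2*π/3) := by
    rw [integral_gaussian]
    congr 1
    ring
  rw [hgaussval] at gauss
  exact gauss.congr' step1

/-- `S(g) ~ 2^{4g−4}/√(6πg)` as `g → ∞`, i.e. `S(g)·√(6πg)/2^{4g−4}` tends to `1` as the
integer `g` tends to infinity. -/
theorem Ssum_asymptotics :
    Filter.Tendsto (fun g : ℕ => Ssum g * Real.sqrt (6 * Real.pi * g) / (2 : ℝ) ^ (4 * g - 4))
      atTop (nhds 1) := by
  have hmain := main_B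
  have heq : ∀ᶠ g : ℕ in atTop,
      Real.sqrt g * Ig g * (Real.sqrt (6*π)/(2*π))
        = Ssum g * Real.sqrt (6 * π * g) / 2 ^ (4*g-4) := by
    filter_upwards [eventually_ge_atTop 2] with g hg
    rw [Ig_eq g hg]
    have h2pow : (0:ℝ) < 2^(4*g-4) := by positivity
    have hpi := Real.pi_pos
    have hsplit : Real.sqrt (6*π*(g:ℝ)) = Real.sqrt (6*π) * Real.sqrt g :=
      Real.sqrt_mul (by positivity) _
    rw [hsplit]
    field_simp
  have hlim := hmain.mul (tendsto_const_nhds (x := Real.sqrt (6*π)/(2*π)))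
  have hval : Real.sqrt (2*π/3) * (Real.sqrt (6*π)/(2*π)) = 1 := by
    rw [show Real.sqrt (2*π/3) * (Real.sqrt (6*π)/(2*π))
        = Real.sqrt (2*π/3) * Real.sqrt (6*π) / (2*π) from by ring,
      ← Real.sqrt_mul (by positivity) (6*π), show (2*π/3) * (6*π) = (2*π)^2 by ring,
      Real.sqrt_sq (by positivity)]
    field_simp
  rw [hval] at hlim
  exact hlim.congr' heq
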